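/- For every μ : {0,…,d} → ℤ with Σ_k μ(k) = 0, the K-subspace {z + 𝔟 : z ∈ U(𝔤) has weight μ} of U(𝔤)/𝔟 is exactly one-dimensional. -/

import Mathlib

open UniversalEnvelopingAlgebra

attribute [local instance 100] LieRing.ofAssociativeRing

/-- For every μ summing to 0, the subspace {z + 𝔟 : z of weight μ} of
U(𝔤)/𝔟 is exactly one-dimensional, where 𝔟 = {z : ρ'(z)(δ_0) = 0} is the annihilator
of δ_0 in the model V of the cyclic module U(𝔤)ξ. -/

lemma aux_diag {K : Type} [Field K] [CharZero K] {n : ℕ}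
    (H : Fin n → Module.End K ((Fin n → ℤ) →₀ K))
    (hH : ∀ k ν, H k (Finsupp.single ν (1:K)) = ν k • Finsupp.single ν (1:K))
    (μ : Fin n → ℤ) (v : (Fin n → ℤ) →₀ K)
    (hv : ∀ k, H k v = μ k • v) :
    v = v μ • Finsupp.single μ 1 := by
  have key : ∀ k (w : (Fin n → ℤ) →₀ K) τ, (H k w) τ = τ k • w τ := by
    intro k w
    induction w using Finsupp.induction_linear with
    | zero => simp
    | add f g hf hg => intro τ; simp [hf, hg, smul_add]
    | single ν b =>
      intro τ
      have h1 : Finsupp.single ν b = b • Finsupp.single ν (1:K) := by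
        simp [Finsupp.smul_single]
      rw [h1, map_smul, hH]
      rcases eq_or_ne ν τ with h | h
      · subst h
        simp [Finsupp.smul_apply, Finsupp.single_eq_same, zsmul_eq_mul]
        ring
      · simp [Finsupp.smul_apply, Finsupp.single_apply, h]
  ext τ
  rcases eq_or_ne τ μ with h | h
  · subst h; simp
  · obtain ⟨k, hk⟩ : ∃ k, τ k ≠ μ k := by
      by_contra hcon
      push_neg at hcon
      exact h (funext hcon)
    have h1 := congrArg (fun w : (Fin n → ℤ) →₀ K => w τ) (hv k)
    simp only [key k v τ, Finsupp.smul_apply] at h1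
    have h2 : ((τ k : K) - (μ k : K)) * v τ = 0 := by
      rw [zsmul_eq_mul, zsmul_eq_mul] at h1
      rw [sub_mul, h1, sub_self]
    have h3 : (τ k : K) - (μ k : K) ≠ 0 := by
      rw [sub_ne_zero]
      exact_mod_cast hk
    have : v τ = 0 := by
      rcases mul_eq_zero.mp h2 with h | h
      · exact absurd h h3
      · exact h
    simp [this, Finsupp.single_apply, Ne.symm h]

lemma aux_wt {R : Type} [Ring R] (h a b : R) (m n : ℤ)
    (ha : h*a - a*h = m • a) (hb : h*b - b*h = n • b) :
    h*(a*b) - (a*b)*h = (m+n) • (a*b) := by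
  have e : h*(a*b) - (a*b)*h = (h*a - a*h)*b + a*(h*b - b*h) := by noncomm_ring
  rw [e, ha, hb, smul_mul_assoc, mul_smul_comm, add_smul]

lemma aux_brk {K : Type} [Field K] {n : ℕ} (k i j : Fin n) (hij : i ≠ j) :
    ι K (Matrix.single k k (1:K)) * ι K (Matrix.single i j (1:K))
      - ι K (Matrix.single i j (1:K)) * ι K (Matrix.single k k (1:K))
    = ((Pi.single i 1 - Pi.single j 1 : Fin n → ℤ) k) • ι K (Matrix.single i j (1:K)) := by
  have h := (ι K (L := Matrix (Fin n) (Fin n) K)).map_lie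
    (Matrix.single k k (1:K)) (Matrix.single i j (1:K))
  rw [Ring.lie_def, Ring.lie_def] at h
  rw [← h, map_sub]
  rcases eq_or_ne k i with rfl | hki
  · rw [Matrix.single_mul_single_same, Matrix.single_mul_single_of_ne (i := k) (j := j) (k := k) (h := Ne.symm hij)]
    simp [Pi.single_apply, hij, Ne.symm hij]
  · rcases eq_or_ne k j with rfl | hkj
    · rw [Matrix.single_mul_single_same, Matrix.single_mul_single_of_ne (i := k) (j := k) (k := i) (h := hki)]
      simp [Pi.single_apply, hki, Ne.symm hki]
    · rw [Matrix.single_mul_single_of_ne (i := k) (j := k) (k := i) (h := hki),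
        Matrix.single_mul_single_of_ne (i := i) (j := j) (k := k) (h := Ne.symm hkj)]
      simp [Pi.single_apply, Ne.symm hki, Ne.symm hkj, hki, hkj]

lemma aux_exists {K : Type} [Field K] [CharZero K] {d : ℕ}
    (ρ' : UniversalEnvelopingAlgebra K (Matrix (Fin (d+1)) (Fin (d+1)) K) →ₐ[K]
        Module.End K ((Fin (d+1) → ℤ) →₀ K))
    (hρ'₁ : ∀ (i j : Fin (d+1)), i ≠ j → ∀ ν : Fin (d+1) → ℤ,
      ρ' (ι K (Matrix.single i j (1:K))) (Finsupp.single ν (1:K)) =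
        (ν j - 1) • Finsupp.single (ν + Pi.single i 1 - Pi.single j 1) (1:K)) :
    ∀ (N : ℕ) (μ : Fin (d+1) → ℤ), (∑ k, (μ k).natAbs) ≤ N → ∑ k, μ k = 0 →
      ∃ z c, c ≠ (0:K) ∧
        (∀ k, ι K (Matrix.single k k (1:K)) * z
            - z * ι K (Matrix.single k k (1:K)) = μ k • z) ∧
        ρ' z (Finsupp.single (0 : Fin (d+1) → ℤ) (1:K)) = c • Finsupp.single μ (1:K) := by
  intro N
  induction N with
  | zero =>
    intro μ hN _
    have hμ : μ = 0 := by
      funext k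
      simp only [Pi.zero_apply]
      have := Finset.sum_eq_zero_iff.mp (Nat.le_zero.mp hN) k (Finset.mem_univ k)
      omega
    subst hμ
    exact ⟨1, 1, one_ne_zero, fun k => by simp, by simp⟩
  | succ N IH =>
    intro μ hN hsum
    by_cases h0 : μ = 0
    · subst h0
      exact ⟨1, 1, one_ne_zero, fun k => by simp, by simp⟩
    · obtain ⟨i, hi⟩ : ∃ i, 0 < μ i := by
        by_contra hcon
        push_neg at hcon
        have := (Finset.sum_eq_zero_iff_of_nonpos (fun k _ => hcon k)).mp hsum
        exact h0 (funext fun k => this k (Finset.mem_univ k))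
      obtain ⟨j, hj⟩ : ∃ j, μ j < 0 := by
        by_contra hcon
        push_neg at hcon
        have := (Finset.sum_eq_zero_iff_of_nonneg (fun k _ => hcon k)).mp hsum
        exact h0 (funext fun k => this k (Finset.mem_univ k))
      have hij : i ≠ j := fun h => by rw [h] at hi; omega
      set μ' : Fin (d+1) → ℤ := μ - Pi.single i 1 + Pi.single j 1 with hμ'
      have hμ'i : μ' i = μ i - 1 := by
        simp [hμ', Pi.single_apply, hij, Ne.symm hij]
      have hμ'j : μ' j = μ j + 1 := by
        simp [hμ', Pi.single_apply, hij, Ne.symm hij]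
      have hμ'o : ∀ k, k ≠ i → k ≠ j → μ' k = μ k := by
        intro k hki hkj
        simp [hμ', Pi.single_apply, hki, hkj]
      have hsum' : ∑ k, μ' k = 0 := by
        simp only [hμ', Pi.add_apply, Pi.sub_apply, Finset.sum_add_distrib,
          Finset.sum_sub_distrib, Finset.sum_pi_single', Finset.mem_univ, if_true, hsum]
        ring
      have hN' : ∑ k, (μ' k).natAbs ≤ N := by
        have hlt : ∑ k, (μ' k).natAbs < ∑ k, (μ k).natAbs := by
          apply Finset.sum_lt_sum
          · intro k _
            rcases eq_or_ne k i with rfl | hki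
            · omega
            rcases eq_or_ne k j with rfl | hkj
            · omega
            · rw [hμ'o k hki hkj]
          · exact ⟨i, Finset.mem_univ i, by omega⟩
        omega
      obtain ⟨z', c', hc', hwt', heq'⟩ := IH μ' hN' hsum'
      refine ⟨ι K (Matrix.single i j (1:K)) * z', ((μ' j - 1 : ℤ) : K) * c',
        mul_ne_zero (Int.cast_ne_zero.mpr (by omega)) hc', ?_, ?_⟩
      · intro k
        have h := aux_wt (ι K (Matrix.single k k (1:K)))
          (ι K (Matrix.single i j (1:K))) z'
          ((Pi.single i 1 - Pi.single j 1 : Fin (d+1) → ℤ) k) (μ' k)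
          (aux_brk k i j hij) (hwt' k)
        have hk : (Pi.single i 1 - Pi.single j 1 : Fin (d+1) → ℤ) k + μ' k = μ k := by
          simp only [hμ', Pi.sub_apply, Pi.add_apply]
          ring
        rwa [hk] at h
      · rw [map_mul, Module.End.mul_apply, heq', map_smul, hρ'₁ i j hij μ']
        have hind : μ' + Pi.single i 1 - Pi.single j 1 = μ := by
          rw [hμ']; abel
        rw [hind, ← Int.cast_smul_eq_zsmul K (μ' j - 1), smul_smul, mul_comm]

theorem stmt_6 (K : Type) [Field K] [CharZero K] (d : ℕ) (hd : 1 ≤ d)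
    (ρ' : UniversalEnvelopingAlgebra K (Matrix (Fin (d+1)) (Fin (d+1)) K) →ₐ[K]
        Module.End K ((Fin (d+1) → ℤ) →₀ K))
    (hρ'₁ : ∀ (i j : Fin (d+1)), i ≠ j → ∀ ν : Fin (d+1) → ℤ,
      ρ' (ι K (Matrix.single i j (1:K))) (Finsupp.single ν (1:K)) =
        (ν j - 1) • Finsupp.single (ν + Pi.single i 1 - Pi.single j 1) (1:K))
    (hρ'₂ : ∀ (k : Fin (d+1)) (ν : Fin (d+1) → ℤ),
      ρ' (ι K (Matrix.single k k (1:K))) (Finsupp.single ν (1:K)) =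
        ν k • Finsupp.single ν (1:K))
    (B : Submodule K (UniversalEnvelopingAlgebra K (Matrix (Fin (d+1)) (Fin (d+1)) K)))
    (hB : ∀ z, z ∈ B ↔ ρ' z (Finsupp.single (0 : Fin (d+1) → ℤ) (1:K)) = 0)
    (μ : Fin (d+1) → ℤ) (hsum : ∑ k, μ k = 0)
    (W : Submodule K (UniversalEnvelopingAlgebra K (Matrix (Fin (d+1)) (Fin (d+1)) K)))
    (hW : ∀ z, z ∈ W ↔ ∀ k : Fin (d+1),
      ι K (Matrix.single k k (1:K)) * z - z * ι K (Matrix.single k k (1:K))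
        = μ k • z) :
    Module.rank K ↥(W.map B.mkQ) = 1 := by
  obtain ⟨z₀, c₀, hc₀, hwt₀, heq₀⟩ :=
    aux_exists ρ' hρ'₁ (∑ k, (μ k).natAbs) μ le_rfl hsum
  have hz₀W : z₀ ∈ W := (hW z₀).mpr hwt₀
  -- every z ∈ W maps δ₀ into K • δ_μ
  have hval : ∀ z ∈ W, ρ' z (Finsupp.single (0 : Fin (d+1) → ℤ) (1:K)) =
      (ρ' z (Finsupp.single (0 : Fin (d+1) → ℤ) (1:K))) μ • Finsupp.single μ (1:K) := by
    intro z hz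
    apply aux_diag (fun k => ρ' (ι K (Matrix.single k k (1:K)))) hρ'₂ μ
    intro k
    have e := congrArg (fun u => ρ' u (Finsupp.single (0 : Fin (d+1) → ℤ) (1:K)))
      ((hW z).mp hz k)
    simp only [map_sub, map_mul, map_zsmul, Module.End.mul_apply, LinearMap.sub_apply,
      LinearMap.smul_apply] at e
    rw [hρ'₂ k 0] at e
    simpa using e
  -- the image is the span of mkQ z₀
  have hspan : W.map B.mkQ = Submodule.span K {B.mkQ z₀} := by
    apply le_antisymm
    · rintro x hx
      obtain ⟨z, hz, rfl⟩ := hx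
      set a : K := (ρ' z (Finsupp.single (0 : Fin (d+1) → ℤ) (1:K))) μ with ha
      have hmem : z - (a / c₀) • z₀ ∈ B := by
        rw [hB, map_sub, map_smul, LinearMap.sub_apply, LinearMap.smul_apply,
          heq₀, hval z hz, ← ha, smul_smul, div_mul_cancel₀ a hc₀, sub_self]
      have : B.mkQ z = (a / c₀) • B.mkQ z₀ := by
        rw [← map_smul]
        exact (Submodule.Quotient.eq B).mpr hmem
      rw [this]
      exact Submodule.smul_mem _ _ (Submodule.mem_span_singleton_self _)
    · rw [Submodule.span_singleton_le_iff_mem]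
      exact ⟨z₀, hz₀W, rfl⟩
  have hne : B.mkQ z₀ ≠ 0 := by
    intro h
    have : z₀ ∈ B := by
      rwa [Submodule.mkQ_apply, Submodule.Quotient.mk_eq_zero] at h
    rw [hB, heq₀] at this
    rcases smul_eq_zero.mp this with h | h
    · exact hc₀ h
    · exact one_ne_zero (Finsupp.single_eq_zero.mp h)
  rw [hspan, rank_span_set (LinearIndepOn.singleton (v := id) hne), Cardinal.mk_singleton]
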